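/- Let θ and θ' be independent real-valued random variables on a probability space, each taking values in [0, 2π], and suppose the law of each of them is absolutely continuous with respect to Lebesgue measure with density bounded almost everywhere by a constant M < ∞. Then for every z ∈ ℂ and every η ∈ (0,1]: ℙ( |z − e^{i(θ+θ')/2}| ≤ η ) ≤ 4π² M² η. -/

import Mathlib

open MeasureTheory

lemma aux_sin (a b : ℝ) :
    ‖Complex.exp (Complex.I * a) - Complex.exp (Complex.I * b)‖
      = 2 * |Real.sin ((a - b) / 2)| := by
  set u : ℝ := (a + b) / 2
  set v : ℝ := (a - b) / 2
  have hsin : Complex.exp ((v : ℂ) * Complex.I) - Complex.exp (-(v : ℂ) * Complex.I)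
      = 2 * Complex.sin (v : ℂ) * Complex.I := by
    rw [Complex.exp_mul_I, Complex.exp_mul_I, Complex.cos_neg, Complex.sin_neg]; ring
  have e1 : Complex.I * (a : ℂ) = (u : ℂ) * Complex.I + (v : ℂ) * Complex.I := by
    push_cast [u, v]; ring
  have e2 : Complex.I * (b : ℂ) = (u : ℂ) * Complex.I + -(v : ℂ) * Complex.I := by
    push_cast [u, v]; ring
  have key : Complex.exp (Complex.I * a) - Complex.exp (Complex.I * b)
      = Complex.exp ((u : ℂ) * Complex.I) * (2 * Complex.sin (v : ℂ) * Complex.I) := by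
    rw [e1, e2, Complex.exp_add, Complex.exp_add, ← mul_sub, hsin]
  rw [key, norm_mul, Complex.norm_exp_ofReal_mul_I, one_mul, norm_mul, norm_mul,
    Complex.norm_I, mul_one, Complex.norm_two, ← Complex.ofReal_sin, Complex.norm_real,
    Real.norm_eq_abs]

lemma slice_bound (z : ℂ) {η : ℝ} (hη : η ∈ Set.Ioc (0 : ℝ) 1) (x : ℝ) :
    volume {y : ℝ | y ∈ Set.Icc (0 : ℝ) (2 * Real.pi) ∧
      ‖z - Complex.exp (Complex.I * (((x + y) / 2 : ℝ) : ℂ))‖ ≤ η}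
      ≤ ENNReal.ofReal (2 * Real.pi * η) := by
  have hπ := Real.pi_pos
  set S := {y : ℝ | y ∈ Set.Icc (0 : ℝ) (2 * Real.pi) ∧
      ‖z - Complex.exp (Complex.I * (((x + y) / 2 : ℝ) : ℂ))‖ ≤ η} with hSdef
  by_cases hS : S.Nonempty
  · have hdiam : ∀ y ∈ S, ∀ y' ∈ S, |y - y'| ≤ 2 * Real.pi * η := by
      intro y hy y' hy'
      have htri : ‖Complex.exp (Complex.I * (((x + y) / 2 : ℝ) : ℂ))
          - Complex.exp (Complex.I * (((x + y') / 2 : ℝ) : ℂ))‖ ≤ 2 * η := by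
        calc ‖Complex.exp (Complex.I * (((x + y) / 2 : ℝ) : ℂ))
              - Complex.exp (Complex.I * (((x + y') / 2 : ℝ) : ℂ))‖
            ≤ ‖Complex.exp (Complex.I * (((x + y) / 2 : ℝ) : ℂ)) - z‖
              + ‖z - Complex.exp (Complex.I * (((x + y') / 2 : ℝ) : ℂ))‖ :=
              norm_sub_le_norm_sub_add_norm_sub _ _ _
          _ ≤ η + η := by
              rw [norm_sub_rev]
              exact add_le_add hy.2 hy'.2
          _ = 2 * η := by ring
      rw [aux_sin] at htri
      have hval : ((x + y) / 2 - (x + y') / 2) / 2 = (y - y') / 4 := by ring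
      rw [hval] at htri
      have h1 := hy.1.1; have h2 := hy.1.2; have h3 := hy'.1.1; have h4 := hy'.1.2
      have hyy : |y - y'| ≤ 2 * Real.pi := abs_sub_le_iff.mpr ⟨by linarith, by linarith⟩
      have habs4 : |(y - y') / 4| = |y - y'| / 4 := by rw [abs_div]; norm_num
      have hub : |(y - y') / 4| ≤ Real.pi / 2 := by rw [habs4]; linarith
      have hjordan := Real.mul_abs_le_abs_sin hub
      have hsinle : |Real.sin ((y - y') / 4)| ≤ η := by linarith
      rw [habs4] at hjordan
      rw [show (2 * Real.pi * η) = η * (2 * Real.pi) by ring,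
        ← div_le_iff₀ (by positivity : (0:ℝ) < 2 * Real.pi)]
      calc |y - y'| / (2 * Real.pi) = 2 / Real.pi * (|y - y'| / 4) := by
            field_simp
            ring
          _ ≤ η := le_trans hjordan hsinle
    have hbdd : BddBelow S := ⟨0, fun y hy => hy.1.1⟩
    have hsub : S ⊆ Set.Icc (sInf S) (sInf S + 2 * Real.pi * η) := by
      intro y hy
      refine ⟨csInf_le hbdd hy, ?_⟩
      have hlb : y - 2 * Real.pi * η ≤ sInf S := by
        apply le_csInf hS
        intro y' hy'
        have := abs_le.mp (hdiam y hy y' hy')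
        linarith
      linarith
    calc volume S ≤ volume (Set.Icc (sInf S) (sInf S + 2 * Real.pi * η)) := measure_mono hsub
      _ = ENNReal.ofReal (2 * Real.pi * η) := by rw [Real.volume_Icc]; ring_nf
  · rw [Set.not_nonempty_iff_eq_empty.mp hS]; simp

/-- If `θ, θ'` are independent random variables with values in `[0,2π]` whose laws
have Lebesgue densities bounded by `M`, then for every `z ∈ ℂ` and `η ∈ (0,1]`,
`ℙ(|z − e^{i(θ+θ')/2}| ≤ η) ≤ 4π² M² η`. -/
theorem stmt_12 {Ω : Type*} [MeasurableSpace Ω] (P : Measure Ω) [IsProbabilityMeasure P]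
    (θ θ' : Ω → ℝ) (hθ : Measurable θ) (hθ' : Measurable θ')
    (hindep : ProbabilityTheory.IndepFun θ θ' P)
    (hrange : ∀ ω, θ ω ∈ Set.Icc (0 : ℝ) (2 * Real.pi))
    (hrange' : ∀ ω, θ' ω ∈ Set.Icc (0 : ℝ) (2 * Real.pi))
    (M : ℝ) (f g : ℝ → ENNReal)
    (hf : Measure.map θ P = volume.withDensity f)
    (hg : Measure.map θ' P = volume.withDensity g)
    (hfM : ∀ᵐ x ∂(volume : Measure ℝ), f x ≤ ENNReal.ofReal M)
    (hgM : ∀ᵐ x ∂(volume : Measure ℝ), g x ≤ ENNReal.ofReal M)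
    (z : ℂ) (η : ℝ) (hη : η ∈ Set.Ioc (0 : ℝ) 1) :
    P {ω | ‖
        (z - Complex.exp (Complex.I * (((θ ω + θ' ω) / 2 : ℝ) : ℂ)))‖ ≤ η}
      ≤ ENNReal.ofReal (4 * Real.pi ^ 2 * M ^ 2 * η) := by
  have hπ := Real.pi_pos
  -- the bad set in the plane
  set A : Set (ℝ × ℝ) :=
    {p : ℝ × ℝ | ‖z - Complex.exp (Complex.I * (((p.1 + p.2) / 2 : ℝ) : ℂ))‖ ≤ η}
      ∩ (Set.Icc (0 : ℝ) (2 * Real.pi) ×ˢ Set.Icc (0 : ℝ) (2 * Real.pi)) with hAdef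
  have hcont : Continuous fun p : ℝ × ℝ =>
      ‖z - Complex.exp (Complex.I * (((p.1 + p.2) / 2 : ℝ) : ℂ))‖ :=
    continuous_norm.comp (by fun_prop)
  have hA : MeasurableSet A :=
    ((isClosed_le hcont continuous_const).measurableSet).inter
      (measurableSet_Icc.prod measurableSet_Icc)
  have hset : {ω | ‖
        (z - Complex.exp (Complex.I * (((θ ω + θ' ω) / 2 : ℝ) : ℂ)))‖ ≤ η}
      = (fun ω => (θ ω, θ' ω)) ⁻¹' A := by
    ext ω
    simp only [hAdef, Set.mem_setOf_eq, Set.mem_preimage, Set.mem_inter_iff, Set.mem_prod]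
    exact ⟨fun h => ⟨h, hrange ω, hrange' ω⟩, fun h => h.1⟩
  have hmap : Measure.map (fun ω => (θ ω, θ' ω)) P
      = (Measure.map θ P).prod (Measure.map θ' P) :=
    (ProbabilityTheory.indepFun_iff_map_prod_eq_prod_map_map hθ.aemeasurable
      hθ'.aemeasurable).mp hindep
  have hPμ : IsProbabilityMeasure (volume.withDensity f) := by
    rw [← hf]; exact Measure.isProbabilityMeasure_map hθ.aemeasurable
  have hPν : IsProbabilityMeasure (volume.withDensity g) := by
    rw [← hg]; exact Measure.isProbabilityMeasure_map hθ'.aemeasurable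
  have hstart : P {ω | ‖
        (z - Complex.exp (Complex.I * (((θ ω + θ' ω) / 2 : ℝ) : ℂ)))‖ ≤ η}
      = ((volume.withDensity f).prod (volume.withDensity g)) A := by
    rw [hset, ← Measure.map_apply (hθ.prodMk hθ') hA, hmap, hf, hg]
  rw [hstart]
  -- product formula
  rw [Measure.prod_apply hA]
  -- slice bound
  have hslice : ∀ x : ℝ, (volume.withDensity g) (Prod.mk x ⁻¹' A)
      ≤ (Set.Icc (0 : ℝ) (2 * Real.pi)).indicator
          (fun _ => ENNReal.ofReal M * ENNReal.ofReal (2 * Real.pi * η)) x := by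
    intro x
    by_cases hx : x ∈ Set.Icc (0 : ℝ) (2 * Real.pi)
    · rw [Set.indicator_of_mem hx]
      set Sx := {y : ℝ | y ∈ Set.Icc (0 : ℝ) (2 * Real.pi) ∧
        ‖z - Complex.exp (Complex.I * (((x + y) / 2 : ℝ) : ℂ))‖ ≤ η} with hSx
      have hsubset : Prod.mk x ⁻¹' A ⊆ Sx := by
        intro y hy
        exact ⟨hy.2.2, hy.1⟩
      have hSxm : MeasurableSet Sx := by
        have : Sx = Set.Icc (0 : ℝ) (2 * Real.pi) ∩
            {y : ℝ | ‖z - Complex.exp (Complex.I * (((x + y) / 2 : ℝ) : ℂ))‖ ≤ η} := by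
          ext y; simp [hSx, and_comm]
        rw [this]
        exact measurableSet_Icc.inter
          (isClosed_le (continuous_norm.comp (by fun_prop)) continuous_const).measurableSet
      calc (volume.withDensity g) (Prod.mk x ⁻¹' A) ≤ (volume.withDensity g) Sx :=
            measure_mono hsubset
        _ = ∫⁻ y in Sx, g y := withDensity_apply g hSxm
        _ ≤ ∫⁻ _ in Sx, ENNReal.ofReal M := setLIntegral_mono_ae aemeasurable_const
            (hgM.mono fun y hy _ => hy)
        _ = ENNReal.ofReal M * volume Sx := by rw [setLIntegral_const, mul_comm]
        _ ≤ ENNReal.ofReal M * ENNReal.ofReal (2 * Real.pi * η) :=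
            mul_le_mul_right (slice_bound z hη x) _
    · rw [Set.indicator_of_notMem hx]
      have : Prod.mk x ⁻¹' A = ∅ := by
        ext y
        simp only [hAdef, Set.mem_preimage, Set.mem_inter_iff, Set.mem_prod, Set.mem_empty_iff_false,
          iff_false]
        intro h
        exact hx h.2.1
      rw [this]; simp
  calc (∫⁻ x, (volume.withDensity g) (Prod.mk x ⁻¹' A) ∂(volume.withDensity f))
      ≤ ∫⁻ x, (Set.Icc (0 : ℝ) (2 * Real.pi)).indicator
          (fun _ => ENNReal.ofReal M * ENNReal.ofReal (2 * Real.pi * η)) x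
          ∂(volume.withDensity f) := lintegral_mono hslice
    _ = ENNReal.ofReal M * ENNReal.ofReal (2 * Real.pi * η)
          * (volume.withDensity f) (Set.Icc (0 : ℝ) (2 * Real.pi)) := by
        rw [lintegral_indicator measurableSet_Icc, setLIntegral_const, mul_comm]
    _ ≤ ENNReal.ofReal M * ENNReal.ofReal (2 * Real.pi * η)
          * (ENNReal.ofReal M * ENNReal.ofReal (2 * Real.pi)) := by
        gcongr
        calc (volume.withDensity f) (Set.Icc (0 : ℝ) (2 * Real.pi))
            = ∫⁻ y in Set.Icc (0 : ℝ) (2 * Real.pi), f y := withDensity_apply f measurableSet_Icc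
          _ ≤ ∫⁻ _ in Set.Icc (0 : ℝ) (2 * Real.pi), ENNReal.ofReal M :=
              setLIntegral_mono_ae aemeasurable_const
                (hfM.mono fun y hy _ => hy)
          _ = ENNReal.ofReal M * volume (Set.Icc (0 : ℝ) (2 * Real.pi)) := by
              rw [setLIntegral_const, mul_comm]
          _ = ENNReal.ofReal M * ENNReal.ofReal (2 * Real.pi) := by
              rw [Real.volume_Icc]; ring_nf
    _ ≤ ENNReal.ofReal (4 * Real.pi ^ 2 * M ^ 2 * η) := by
        have hMabs : ENNReal.ofReal M ≤ ENNReal.ofReal |M| :=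
          ENNReal.ofReal_le_ofReal (le_abs_self M)
        calc ENNReal.ofReal M * ENNReal.ofReal (2 * Real.pi * η)
              * (ENNReal.ofReal M * ENNReal.ofReal (2 * Real.pi))
            ≤ ENNReal.ofReal |M| * ENNReal.ofReal (2 * Real.pi * η)
              * (ENNReal.ofReal |M| * ENNReal.ofReal (2 * Real.pi)) := by gcongr
          _ = ENNReal.ofReal (|M| * (2 * Real.pi * η) * (|M| * (2 * Real.pi))) := by
              rw [← ENNReal.ofReal_mul (abs_nonneg M), ← ENNReal.ofReal_mul (abs_nonneg M),
                ← ENNReal.ofReal_mul (mul_nonneg (abs_nonneg M)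
                  (by nlinarith [Real.pi_pos, hη.1] : (0:ℝ) ≤ 2 * Real.pi * η))]
          _ = ENNReal.ofReal (4 * Real.pi ^ 2 * M ^ 2 * η) := by
              congr 1
              have habsM : |M| * |M| = M ^ 2 := by rw [abs_mul_abs_self]; ring
              rw [← habsM]; ring
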